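/- Suppose a group G acts geometrically on a CAT(0) space X and let g ∈ G. If the fixed-point set F_g = {x ∈ X : gx = x} is unbounded, then the fixed-point set ℱ_g = {α ∈ ∂X : gα = α} on the boundary is nonempty. Consequently, if the centralizer Z_g is finite, then F_g is bounded. -/

import Mathlib

open Metric Set Filter Pointwise

/-- A unit-speed geodesic segment from `x` to `y`, parametrized on `[0, dist x y]`. -/
def IsGeodesicFromTo {X : Type*} [MetricSpace X] (f : ℝ → X) (x y : X) : Prop :=
  f 0 = x ∧ f (dist x y) = y ∧
    ∀ s ∈ Set.Icc (0 : ℝ) (dist x y), ∀ t ∈ Set.Icc (0 : ℝ) (dist x y),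
      dist (f s) (f t) = |s - t|

/-- A geodesic metric space: any two points are joined by a geodesic segment. -/
def IsGeodesicSpace (X : Type*) [MetricSpace X] : Prop :=
  ∀ x y : X, ∃ f : ℝ → X, IsGeodesicFromTo f x y

/-- A CAT(0) space: a geodesic space all of whose geodesic triangles satisfy the CAT(0)
comparison inequality (stated here in its standard equivalent form: the comparison
inequality for a point `z` and a point on a geodesic from `x` to `y`). -/
def IsCAT0Space (X : Type*) [MetricSpace X] : Prop :=
  IsGeodesicSpace X ∧
    ∀ (x y z : X) (f : ℝ → X), IsGeodesicFromTo f x y →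
      ∀ t ∈ Set.Icc (0 : ℝ) 1,
        dist z (f (t * dist x y)) ^ 2 ≤
          (1 - t) * dist z x ^ 2 + t * dist z y ^ 2 - t * (1 - t) * dist x y ^ 2

/-- A subset `C` is (geodesically) convex: every geodesic segment between points of `C`
lies in `C`. -/
def GeodesicConvex {X : Type*} [MetricSpace X] (C : Set X) : Prop :=
  ∀ x ∈ C, ∀ y ∈ C, ∀ f : ℝ → X, IsGeodesicFromTo f x y →
    ∀ t ∈ Set.Icc (0 : ℝ) (dist x y), f t ∈ C

/-- A geometric action: an action by isometries which is proper and cocompact. -/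
structure IsGeometricAction (G X : Type*) [Group G] [MetricSpace X] [MulAction G X] : Prop where
  isometry : ∀ g : G, Isometry (fun x : X => g • x)
  proper : ∀ K : Set X, IsCompact K →
    {g : G | ((fun x : X => g • x) '' K ∩ K).Nonempty}.Finite
  cocompact : ∃ K : Set X, IsCompact K ∧ ⋃ g : G, (fun x : X => g • x) '' K = Set.univ

/-- A unit-speed geodesic ray starting at `x0`. -/
def IsGeodesicRayFrom {X : Type*} [MetricSpace X] (x0 : X) (ξ : ℝ → X) : Prop :=
  ξ 0 = x0 ∧ ∀ s t : ℝ, 0 ≤ s → 0 ≤ t → dist (ξ s) (ξ t) = |s - t|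

/-- The boundary of a proper CAT(0) space, modelled as the set of geodesic rays emanating
from the basepoint `x0`; the cone topology coincides with the topology of pointwise
convergence of rays (as a subspace of `ℝ → X` with the product topology). -/
abbrev Boundary (X : Type*) [MetricSpace X] (x0 : X) : Type _ :=
  {ξ : ℝ → X // IsGeodesicRayFrom x0 ξ}

/-- Two maps `ℝ → X` are asymptotic if they are at bounded distance on `[0, ∞)`. -/
def AsymptoticMaps {X : Type*} [MetricSpace X] (f g : ℝ → X) : Prop :=
  ∃ C : ℝ, ∀ t : ℝ, 0 ≤ t → dist (f t) (g t) ≤ C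

/-- The image `Im ξ` of a geodesic ray `ξ` (on `[0, ∞)`). -/
def rayImage {X : Type*} [MetricSpace X] {x0 : X} (ξ : Boundary X x0) : Set X :=
  ξ.1 '' Set.Ici (0 : ℝ)

/-- A sequence of points of `X` converges, in the cone topology on `X ∪ ∂X`, to the
boundary point `β`: the distances from the basepoint tend to infinity, and the geodesic
segments from the basepoint to the points of the sequence converge pointwise to the ray
representing `β`. -/
def TendstoBoundary {X : Type*} [MetricSpace X] (x0 : X) (x : ℕ → X) (β : Boundary X x0) : Prop :=
  Tendsto (fun n => dist x0 (x n)) atTop atTop ∧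
    ∀ f : ℕ → ℝ → X, (∀ n, IsGeodesicFromTo (f n) x0 (x n)) →
      ∀ t : ℝ, 0 ≤ t →
        Tendsto (fun n => f n (min t (dist x0 (x n)))) atTop (nhds (β.1 t))


section AuxLemmas

variable {G X : Type*} [Group G] [MetricSpace X] [MulAction G X]

lemma aux_geodesic_rev {f : ℝ → X} {x y : X} (h : IsGeodesicFromTo f x y) :
    IsGeodesicFromTo (fun s => f (dist x y - s)) y x := by
  obtain ⟨h0, h1, hm⟩ := h
  refine ⟨by simpa using h1, by rw [dist_comm]; simpa using h0, ?_⟩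
  intro s hs t ht
  rw [dist_comm y x] at hs ht
  have e1 : dist x y - s ∈ Set.Icc (0:ℝ) (dist x y) := ⟨by linarith [hs.2], by linarith [hs.1]⟩
  have e2 : dist x y - t ∈ Set.Icc (0:ℝ) (dist x y) := ⟨by linarith [ht.2], by linarith [ht.1]⟩
  rw [hm _ e1 _ e2]
  rw [show dist x y - s - (dist x y - t) = t - s by ring, abs_sub_comm]

lemma aux_geodesic_map {T : X → X} (hT : Isometry T) {f : ℝ → X} {x y : X}
    (h : IsGeodesicFromTo f x y) : IsGeodesicFromTo (fun s => T (f s)) (T x) (T y) := by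
  obtain ⟨h0, h1, hm⟩ := h
  have hd : dist (T x) (T y) = dist x y := hT.dist_eq x y
  refine ⟨by show T (f 0) = T x; rw [h0], by show T (f (dist (T x) (T y))) = T y; rw [hd, h1], ?_⟩
  intro s hs t ht
  rw [hd] at hs ht
  show dist (T (f s)) (T (f t)) = |s - t|
  rw [hT.dist_eq, hm s hs t ht]

lemma aux_cat0_conv (hCAT : IsCAT0Space X) {p x y : X} {α β : ℝ → X}
    (hα : IsGeodesicFromTo α p x) (hβ : IsGeodesicFromTo β p y) {t : ℝ}
    (ht : t ∈ Set.Icc (0:ℝ) 1) :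
    dist (α (t * dist p x)) (β (t * dist p y)) ≤ t * dist x y := by
  have htd : t * dist p x ∈ Set.Icc (0:ℝ) (dist p x) :=
    ⟨mul_nonneg ht.1 dist_nonneg, by
      nlinarith [dist_nonneg (x := p) (y := x), ht.2, ht.1]⟩
  have h1 := hCAT.2 p x y α hα t ht
  have h2 := hCAT.2 p y (α (t * dist p x)) β hβ t ht
  have hmp : dist (α (t * dist p x)) p = t * dist p x := by
    have h3 := hα.2.2 (t * dist p x) htd 0 ⟨le_refl 0, dist_nonneg⟩
    rw [hα.1] at h3
    rw [h3, sub_zero, abs_of_nonneg (mul_nonneg ht.1 dist_nonneg)]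
  rw [hmp] at h2
  rw [dist_comm y p, dist_comm y x, dist_comm y (α (t * dist p x))] at h1
  have key : dist (α (t * dist p x)) (β (t * dist p y)) ^ 2 ≤ (t * dist x y) ^ 2 := by
    nlinarith [h1, h2, ht.1, ht.2, mul_le_mul_of_nonneg_left h1 ht.1]
  nlinarith [key, dist_nonneg (x := α (t * dist p x)) (y := β (t * dist p y)),
    mul_nonneg ht.1 (dist_nonneg (x := x) (y := y))]

lemma aux_moved_le (hCAT : IsCAT0Space X) {g : G} (hiso : Isometry (fun z : X => g • z))
    {f : ℝ → X} {x0 x : X} (hf : IsGeodesicFromTo f x0 x) (hfix : g • x = x)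
    {u : ℝ} (hu : u ∈ Set.Icc (0:ℝ) (dist x0 x)) :
    dist (g • f u) (f u) ≤ dist (g • x0) x0 := by
  by_cases hd0 : dist x0 x = 0
  · have hu0 : u = 0 := le_antisymm (hd0 ▸ hu.2) hu.1
    rw [hu0, hf.1]
  · have hdpos : 0 < dist x0 x := lt_of_le_of_ne dist_nonneg (Ne.symm hd0)
    set d := dist x0 x with hd
    set t : ℝ := (d - u) / d with htdef
    have ht : t ∈ Set.Icc (0:ℝ) 1 := by
      constructor
      · exact div_nonneg (by linarith [hu.2]) hdpos.le
      · rw [div_le_one hdpos]; linarith [hu.1]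
    have hα : IsGeodesicFromTo (fun s => f (d - s)) x x0 := aux_geodesic_rev hf
    have hβ0 : IsGeodesicFromTo (fun s => g • f s) (g • x0) (g • x) := aux_geodesic_map hiso hf
    have hβ1 : IsGeodesicFromTo (fun s => g • f (dist (g • x0) (g • x) - s)) (g • x) (g • x0) :=
      aux_geodesic_rev hβ0
    have hdg : dist (g • x0) (g • x) = d := hiso.dist_eq x0 x
    rw [hdg, hfix] at hβ1
    have hconv := aux_cat0_conv hCAT hα hβ1 ht
    have e1 : dist x x0 = d := by rw [dist_comm]
    have e2 : dist x (g • x0) = d := by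
      conv_lhs => rw [← hfix]
      rw [show dist (g • x) (g • x0) = dist x x0 from hiso.dist_eq x x0]
      exact e1
    rw [e1, e2] at hconv
    have e3 : t * d = d - u := div_mul_cancel₀ _ hd0
    rw [e3, show d - (d - u) = u by ring] at hconv
    calc dist (g • f u) (f u) = dist (f u) (g • f u) := dist_comm _ _
      _ ≤ t * dist x0 (g • x0) := hconv
      _ ≤ 1 * dist x0 (g • x0) := mul_le_mul_of_nonneg_right ht.2 dist_nonneg
      _ = dist (g • x0) x0 := by rw [one_mul, dist_comm]

lemma aux_key_finite (hGA : IsGeometricAction G X) {K : Set X} (hK : IsCompact K) :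
    ∃ ε : ℝ, 0 < ε ∧ {gg : G | ∃ a ∈ K, ∃ b ∈ K, dist a (gg • b) ≤ ε}.Finite := by
  classical
  by_contra hcon
  push_neg at hcon
  have hinf : ∀ n : ℕ, {gg : G | ∃ a ∈ K, ∃ b ∈ K, dist a (gg • b) ≤ 1/((n:ℝ)+1)}.Infinite :=
    fun n => hcon (1/((n:ℝ)+1)) (by positivity)
  have hstep : ∀ (n : ℕ) (s : Finset G),
      ∃ gg : G, gg ∉ s ∧ ∃ a ∈ K, ∃ b ∈ K, dist a (gg • b) ≤ 1/((n:ℝ)+1) := by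
    intro n s
    obtain ⟨gg, hgg, hns⟩ := (hinf n).exists_notMem_finset s
    exact ⟨gg, hns, hgg⟩
  let F : ℕ → Finset G := fun n => Nat.rec ∅ (fun k acc => insert (hstep k acc).choose acc) n
  let gs : ℕ → G := fun n => (hstep n (F n)).choose
  have hFsucc : ∀ n, F (n+1) = insert (gs n) (F n) := fun n => rfl
  have hgsnot : ∀ n, gs n ∉ F n := fun n => (hstep n (F n)).choose_spec.1
  have hgsK : ∀ n, ∃ a ∈ K, ∃ b ∈ K, dist a (gs n • b) ≤ 1/((n:ℝ)+1) :=
    fun n => (hstep n (F n)).choose_spec.2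
  have hmem : ∀ m n, m < n → gs m ∈ F n := by
    intro m n h
    induction n with
    | zero => omega
    | succ k ih =>
      rw [hFsucc]
      rcases Nat.lt_succ_iff_lt_or_eq.mp h with h' | h'
      · exact Finset.mem_insert_of_mem (ih h')
      · subst h'; exact Finset.mem_insert_self _ _
  have hinj : Function.Injective gs := by
    intro m n hmn
    by_contra hne
    rcases Nat.lt_or_ge m n with h | h
    · exact hgsnot n (hmn ▸ hmem m n h)
    · exact hgsnot m (hmn ▸ hmem n m (lt_of_le_of_ne h (Ne.symm hne)))
  choose a ha b hb hdd using hgsK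
  obtain ⟨a0, ha0K, φ, hφ, hφa⟩ := hK.tendsto_subseq ha
  obtain ⟨b0, hb0K, ψ, hψ, hψb⟩ := hK.tendsto_subseq (x := fun k => b (φ k)) (fun k => hb (φ k))
  set ρ : ℕ → ℕ := fun k => φ (ψ k) with hρ
  have hρmono : StrictMono ρ := hφ.comp hψ
  set y : ℕ → X := fun k => gs (ρ k) • b0 with hy
  have hylim : Filter.Tendsto y Filter.atTop (nhds a0) := by
    rw [tendsto_iff_dist_tendsto_zero]
    have hbound : ∀ k, dist (y k) a0 ≤
        dist b0 (b (ρ k)) + 1/((ρ k : ℝ)+1) + dist (a (ρ k)) a0 := by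
      intro k
      calc dist (y k) a0 ≤ dist (y k) (gs (ρ k) • b (ρ k)) + dist (gs (ρ k) • b (ρ k)) (a (ρ k))
            + dist (a (ρ k)) a0 := dist_triangle4 _ _ _ _
        _ ≤ dist b0 (b (ρ k)) + 1/((ρ k : ℝ)+1) + dist (a (ρ k)) a0 := by
            refine add_le_add ?_ le_rfl
            apply add_le_add
            · exact le_of_eq ((hGA.isometry (gs (ρ k))).dist_eq b0 (b (ρ k)))
            · rw [dist_comm]; exact hdd (ρ k)
    have ht1 : Filter.Tendsto (fun k => dist b0 (b (ρ k))) Filter.atTop (nhds 0) :=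
      (tendsto_iff_dist_tendsto_zero.mp hψb).congr fun k => dist_comm _ _
    have ht2 : Filter.Tendsto (fun k => 1/((ρ k : ℝ)+1)) Filter.atTop (nhds 0) :=
      tendsto_one_div_add_atTop_nhds_zero_nat.comp hρmono.tendsto_atTop
    have ht3 : Filter.Tendsto (fun k => dist (a (ρ k)) a0) Filter.atTop (nhds 0) :=
      tendsto_iff_dist_tendsto_zero.mp (hφa.comp hψ.tendsto_atTop)
    have htot := (ht1.add ht2).add ht3
    rw [show (0:ℝ) + 0 + 0 = 0 by ring] at htot
    exact squeeze_zero (fun k => dist_nonneg) hbound htot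
  have hC : IsCompact (K ∪ insert a0 (Set.range y)) := hK.union hylim.isCompact_insert_range
  have hfin := hGA.proper _ hC
  refine (infinite_of_injective_forall_mem (f := fun k => gs (ρ k))
    (hinj.comp hρmono.injective) ?_) hfin
  intro k
  exact ⟨y k, ⟨b0, Or.inl hb0K, rfl⟩, Or.inr (Or.inr ⟨k, rfl⟩)⟩

lemma aux_T_finite (hGA : IsGeometricAction G X) (hgeo : IsGeodesicSpace X) {K : Set X}
    (hK : IsCompact K) (hcov : ⋃ gg : G, (fun x : X => gg • x) '' K = Set.univ) (R : ℝ) :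
    {gg : G | ∃ a ∈ K, ∃ b ∈ K, dist a (gg • b) ≤ R}.Finite := by
  obtain ⟨ε, hε, hfin⟩ := aux_key_finite hGA hK
  have hcover : ∀ z : X, ∃ h : G, ∃ c ∈ K, z = h • c := by
    intro z
    have hz : z ∈ ⋃ gg : G, (fun x : X => gg • x) '' K := by rw [hcov]; trivial
    obtain ⟨s, ⟨gg, rfl⟩, hmem⟩ := hz
    obtain ⟨c, hcK, hc⟩ := hmem
    exact ⟨gg, c, hcK, hc.symm⟩
  have hstep : ∀ r s : ℝ, 0 ≤ r → 0 ≤ s →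
      {gg : G | ∃ a ∈ K, ∃ b ∈ K, dist a (gg • b) ≤ r + s} ⊆
      Set.image2 (· * ·) {gg : G | ∃ a ∈ K, ∃ b ∈ K, dist a (gg • b) ≤ r}
        {gg : G | ∃ a ∈ K, ∃ b ∈ K, dist a (gg • b) ≤ s} := by
    intro r s hr hs gg hgg
    obtain ⟨aa, haK, bb, hbK, hdist⟩ := hgg
    obtain ⟨f, hf⟩ := hgeo aa (gg • bb)
    set d := dist aa (gg • bb) with hdd
    have hd0 : (0:ℝ) ≤ d := dist_nonneg
    have hminIcc : min r d ∈ Set.Icc (0:ℝ) d := ⟨le_min hr hd0, min_le_right _ _⟩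
    obtain ⟨h, c, hcK, hp⟩ := hcover (f (min r d))
    have hda : dist aa (f (min r d)) = min r d := by
      have h1 := hf.2.2 0 ⟨le_refl 0, hd0⟩ (min r d) hminIcc
      rw [hf.1] at h1
      rw [h1, zero_sub, abs_neg, abs_of_nonneg hminIcc.1]
    have hdb : dist (f (min r d)) (gg • bb) = d - min r d := by
      have h1 := hf.2.2 (min r d) hminIcc d ⟨hd0, le_refl d⟩
      rw [hf.2.1] at h1
      rw [h1, abs_of_nonpos (sub_nonpos.mpr (min_le_right _ _)), neg_sub]
    refine ⟨h, ⟨aa, haK, c, hcK, ?_⟩, h⁻¹ * gg, ⟨c, hcK, bb, hbK, ?_⟩, by group⟩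
    · rw [← hp, hda]; exact min_le_left _ _
    · have e1 : dist c ((h⁻¹ * gg) • bb) = dist (h • c) (h • (h⁻¹ * gg) • bb) :=
        ((hGA.isometry h).dist_eq _ _).symm
      have e2 : h • (h⁻¹ * gg) • bb = gg • bb := by
        rw [smul_smul, mul_inv_cancel_left]
      rw [e1, e2, ← hp, hdb]
      rcases min_cases r d with ⟨hm, _⟩ | ⟨hm, _⟩ <;> rw [hm] <;> linarith
  have hn : ∀ n : ℕ, {gg : G | ∃ a ∈ K, ∃ b ∈ K, dist a (gg • b) ≤ ((n:ℝ)+1) * ε}.Finite := by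
    intro n
    induction n with
    | zero => simpa using hfin
    | succ k ih =>
      have hsub := hstep (((k:ℝ)+1)*ε) ε (by positivity) hε.le
      refine Set.Finite.subset (Set.Finite.image2 (· * ·) ih hfin) ?_
      intro gg hgg
      apply hsub
      obtain ⟨aa, haK, bb, hbK, hgd⟩ := hgg
      refine ⟨aa, haK, bb, hbK, ?_⟩
      rw [show ((k:ℝ)+1)*ε + ε = ((k:ℝ)+1+1)*ε by ring]
      push_cast at hgd
      linarith
  obtain ⟨n, hnR⟩ := exists_nat_ge (R / ε)
  refine (hn n).subset ?_
  intro gg hgg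
  obtain ⟨aa, haK, bb, hbK, hgd⟩ := hgg
  refine ⟨aa, haK, bb, hbK, hgd.trans ?_⟩
  rw [div_le_iff₀ hε] at hnR
  nlinarith [hε]

lemma aux_proper (hGA : IsGeometricAction G X) (hgeo : IsGeodesicSpace X) : ProperSpace X := by
  obtain ⟨K, hK, hcov⟩ := hGA.cocompact
  have hcover : ∀ z : X, ∃ h : G, ∃ c ∈ K, z = h • c := by
    intro z
    have hz : z ∈ ⋃ gg : G, (fun x : X => gg • x) '' K := by rw [hcov]; trivial
    obtain ⟨s, ⟨gg, rfl⟩, hmem⟩ := hz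
    obtain ⟨c, hcK, hc⟩ := hmem
    exact ⟨gg, c, hcK, hc.symm⟩
  constructor
  intro x r
  rcases lt_or_ge r 0 with hr | hr
  · rw [Metric.closedBall_eq_empty.2 hr]; exact isCompact_empty
  · obtain ⟨h0, c0, hc0, hx⟩ := hcover x
    have hT := aux_T_finite hGA hgeo hK hcov r
    refine IsCompact.of_isClosed_subset (Set.Finite.isCompact_biUnion hT
      (fun u _ => hK.image (hGA.isometry (h0 * u)).continuous)) Metric.isClosed_closedBall ?_
    intro z hz
    obtain ⟨h, c, hcK, hzc⟩ := hcover z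
    have humem : h0⁻¹ * h ∈ {gg : G | ∃ a ∈ K, ∃ b ∈ K, dist a (gg • b) ≤ r} := by
      refine ⟨c0, hc0, c, hcK, ?_⟩
      have e0 : dist c0 ((h0⁻¹ * h) • c) = dist (h0 • c0) (h0 • (h0⁻¹ * h) • c) :=
        ((hGA.isometry h0).dist_eq _ _).symm
      have e1 : h0 • (h0⁻¹ * h) • c = h • c := by
        rw [smul_smul, mul_inv_cancel_left]
      rw [e0, e1, ← hx, ← hzc]
      exact Metric.mem_closedBall'.mp hz
    refine Set.mem_biUnion humem ⟨c, hcK, ?_⟩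
    show (h0 * (h0⁻¹ * h)) • c = z
    rw [mul_inv_cancel_left]
    exact hzc.symm

end AuxLemmas

/-- If `G` acts geometrically on a CAT(0) space `X` and `g ∈ G`, then: if the fixed-point
set `F_g ⊆ X` is unbounded, the fixed-point set `ℱ_g ⊆ ∂X` is nonempty; consequently,
if the centralizer `Z_g` is finite then `F_g` is bounded. -/
theorem boundary_fixed_point_of_unbounded_fixed_set
    {G X : Type*} [Group G] [MetricSpace X] [MulAction G X]
    (hGA : IsGeometricAction G X) (hCAT : IsCAT0Space X) (g : G) :
    (¬ Bornology.IsBounded {x : X | g • x = x} →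
      ∀ x0 : X, ∃ α : Boundary X x0, AsymptoticMaps (fun t => g • α.1 t) α.1) ∧
    ({h : G | g * h = h * g}.Finite → Bornology.IsBounded {x : X | g • x = x}) := by
  classical
  obtain ⟨K, hKcomp, hcov⟩ := hGA.cocompact
  have hcover : ∀ z : X, ∃ h : G, ∃ c ∈ K, z = h • c := by
    intro z
    have hz : z ∈ ⋃ gg : G, (fun x : X => gg • x) '' K := by rw [hcov]; trivial
    obtain ⟨s, ⟨gg, rfl⟩, hmem⟩ := hz
    obtain ⟨c, hcK, hc⟩ := hmem
    exact ⟨gg, c, hcK, hc.symm⟩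
  constructor
  · -- Part 1
    intro hub x0
    haveI hps : ProperSpace X := aux_proper hGA hCAT.1
    have hx : ∀ n : ℕ, ∃ x : X, g • x = x ∧ (n:ℝ) < dist x0 x := by
      intro n
      by_contra hcon
      push_neg at hcon
      refine hub ((Metric.isBounded_closedBall (x := x0) (r := n)).subset ?_)
      intro z hz
      exact Metric.mem_closedBall.mpr ((dist_comm x0 z) ▸ hcon z hz)
    choose x hxfix hxfar using hx
    choose f hfg using fun n => hCAT.1 x0 (x n)
    set c : ℕ → ℚ → ℝ := fun n q => min (max (q:ℝ) 0) (dist x0 (x n)) with hcc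
    have hcIcc : ∀ n q, c n q ∈ Set.Icc (0:ℝ) (dist x0 (x n)) := fun n q =>
      ⟨le_min (le_max_right _ _) dist_nonneg, min_le_right _ _⟩
    set Fq : ℕ → ℚ → X := fun n q => f n (c n q) with hFq
    have hFmem : ∀ (n : ℕ) (q : ℚ), Fq n q ∈ Metric.closedBall x0 (max (q:ℝ) 0) := by
      intro n q
      rw [Metric.mem_closedBall']
      have h1 := (hfg n).2.2 0 ⟨le_refl 0, dist_nonneg⟩ (c n q) (hcIcc n q)
      rw [(hfg n).1] at h1
      show dist x0 (f n (c n q)) ≤ max (q:ℝ) 0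
      rw [h1, zero_sub, abs_neg, abs_of_nonneg (hcIcc n q).1]
      exact min_le_left _ _
    have hS : IsCompact (Set.univ.pi fun q : ℚ => Metric.closedBall x0 (max (q:ℝ) 0)) :=
      isCompact_univ_pi fun q => isCompact_closedBall _ _
    obtain ⟨Φ, hΦS, σ, hσ, hσt⟩ := hS.tendsto_subseq (x := fun n => Fq n)
      (fun n => Set.mem_univ_pi.mpr fun q => hFmem n q)
    have hpt : ∀ q : ℚ, Filter.Tendsto (fun k => Fq (σ k) q) Filter.atTop (nhds (Φ q)) :=
      fun q => (tendsto_pi_nhds.mp hσt) q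
    have hceq : ∀ q : ℚ, 0 ≤ (q:ℝ) → ∀ᶠ k in Filter.atTop, c (σ k) q = (q:ℝ) := by
      intro q hq
      filter_upwards [Filter.eventually_ge_atTop ⌈(q:ℝ)⌉₊] with k hk
      have ha : (q:ℝ) ≤ (⌈(q:ℝ)⌉₊ : ℝ) := Nat.le_ceil _
      have hb : ((⌈(q:ℝ)⌉₊ : ℕ) : ℝ) ≤ ((σ k : ℕ) : ℝ) :=
        Nat.cast_le.mpr (hk.trans hσ.le_apply)
      have h1 : (q:ℝ) ≤ dist x0 (x (σ k)) := by
        have h2 := hxfar (σ k)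
        linarith
      show min (max ((q:ℚ):ℝ) 0) (dist x0 (x (σ k))) = (q:ℝ)
      simp only [max_eq_left hq, min_eq_left h1]
    have hΦdist : ∀ q q' : ℚ, 0 ≤ (q:ℝ) → 0 ≤ (q':ℝ) →
        dist (Φ q) (Φ q') = |(q:ℝ) - (q':ℝ)| := by
      intro q q' hq hq'
      refine tendsto_nhds_unique ((hpt q).dist (hpt q')) ?_
      refine Filter.Tendsto.congr' ?_ tendsto_const_nhds
      filter_upwards [hceq q hq, hceq q' hq'] with k h1 h2
      have h3 := (hfg (σ k)).2.2 (c (σ k) q) (hcIcc (σ k) q) (c (σ k) q') (hcIcc (σ k) q')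
      show |(q:ℝ) - (q':ℝ)| = dist (f (σ k) (c (σ k) q)) (f (σ k) (c (σ k) q'))
      rw [h3, h1, h2]
    have hΦ0 : Φ 0 = x0 := by
      refine tendsto_nhds_unique (hpt 0) ?_
      have heq : ∀ k, Fq (σ k) 0 = x0 := by
        intro k
        show f (σ k) (c (σ k) 0) = x0
        have hc0 : c (σ k) 0 = 0 := by
          show min (max ((0:ℚ):ℝ) 0) (dist x0 (x (σ k))) = 0
          simp [min_eq_left dist_nonneg]
        rw [hc0, (hfg (σ k)).1]
      exact tendsto_const_nhds.congr fun k => (heq k).symm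
    have hΦg : ∀ q : ℚ, 0 ≤ (q:ℝ) → dist (g • Φ q) (Φ q) ≤ dist (g • x0) x0 := by
      intro q hq
      have hgt : Filter.Tendsto (fun k => g • Fq (σ k) q) Filter.atTop (nhds (g • Φ q)) :=
        ((hGA.isometry g).continuous.tendsto _).comp (hpt q)
      refine le_of_tendsto (hgt.dist (hpt q)) (Filter.Eventually.of_forall fun k => ?_)
      exact aux_moved_le hCAT (hGA.isometry g) (hfg (σ k)) (hxfix (σ k)) (hcIcc (σ k) q)
    have happrox : ∀ (t : ℝ) (i : ℕ), ∃ q : ℚ, max t 0 < (q:ℝ) ∧ (q:ℝ) < max t 0 + 1/((i:ℝ)+1) := by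
      intro t i
      exact exists_rat_btwn (lt_add_of_pos_right _ (by positivity))
    choose qt hqt1 hqt2 using happrox
    have hqt0 : ∀ t i, 0 ≤ ((qt t i : ℚ):ℝ) := fun t i => (le_max_right t 0).trans (hqt1 t i).le
    set u : ℝ → ℕ → X := fun t i => Φ (qt t i) with hu
    have hqterr : ∀ t i, |((qt t i : ℚ):ℝ) - max t 0| ≤ 1/((i:ℝ)+1) := by
      intro t i
      rw [abs_of_nonneg (by linarith [hqt1 t i])]
      linarith [hqt2 t i]
    have hqtlim : ∀ t, Filter.Tendsto (fun i => ((qt t i : ℚ):ℝ)) Filter.atTop (nhds (max t 0)) := by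
      intro t
      refine tendsto_of_tendsto_of_tendsto_of_le_of_le (g := fun _ => max t 0)
        (h := fun i : ℕ => max t 0 + 1/((i:ℝ)+1)) tendsto_const_nhds ?_
        (fun i => (hqt1 t i).le) (fun i => (hqt2 t i).le)
      have := tendsto_const_nhds (x := max t 0) (f := Filter.atTop (α := ℕ))
      simpa using this.add tendsto_one_div_add_atTop_nhds_zero_nat
    have hcauchy : ∀ t, CauchySeq (u t) := by
      intro t
      apply cauchySeq_of_le_tendsto_0 (fun N : ℕ => 2/((N:ℝ)+1))
      · intro n m N hn hm
        have e0 : dist (u t n) (u t m) = |((qt t n:ℚ):ℝ) - ((qt t m:ℚ):ℝ)| :=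
          hΦdist _ _ (hqt0 t n) (hqt0 t m)
        rw [e0]
        have b1 := hqterr t n
        have b2 := hqterr t m
        have c1 : 1/((n:ℝ)+1) ≤ 1/((N:ℝ)+1) := by
          apply one_div_le_one_div_of_le (by positivity)
          have : ((N:ℕ):ℝ) ≤ ((n:ℕ):ℝ) := Nat.cast_le.mpr hn
          linarith
        have c2 : 1/((m:ℝ)+1) ≤ 1/((N:ℝ)+1) := by
          apply one_div_le_one_div_of_le (by positivity)
          have : ((N:ℕ):ℝ) ≤ ((m:ℕ):ℝ) := Nat.cast_le.mpr hm
          linarith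
        calc |((qt t n:ℚ):ℝ) - ((qt t m:ℚ):ℝ)|
            ≤ |((qt t n:ℚ):ℝ) - max t 0| + |max t 0 - ((qt t m:ℚ):ℝ)| := abs_sub_le _ _ _
          _ ≤ 1/((N:ℝ)+1) + 1/((N:ℝ)+1) := by
              rw [abs_sub_comm (max t 0)]
              exact add_le_add (b1.trans c1) (b2.trans c2)
          _ = 2/((N:ℝ)+1) := by ring
      · have h2 := tendsto_one_div_add_atTop_nhds_zero_nat.const_mul (2:ℝ)
        rw [mul_zero] at h2
        refine h2.congr fun N => ?_
        ring
    have hlim : ∀ t : ℝ, ∃ pt : X, Filter.Tendsto (u t) Filter.atTop (nhds pt) :=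
      fun t => cauchySeq_tendsto_of_complete (hcauchy t)
    choose ξ hξ using hlim
    have hray : IsGeodesicRayFrom x0 ξ := by
      constructor
      · refine tendsto_nhds_unique (hξ 0) ?_
        rw [tendsto_iff_dist_tendsto_zero]
        have heq : ∀ i, dist (u 0 i) x0 = ((qt 0 i:ℚ):ℝ) := by
          intro i
          have h3 := hΦdist (qt 0 i) 0 (hqt0 0 i) (by norm_num)
          rw [hΦ0] at h3
          show dist (Φ (qt 0 i)) x0 = ((qt 0 i:ℚ):ℝ)
          rw [h3]
          simpa using abs_of_nonneg (hqt0 0 i)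
        have h2 := hqtlim 0
        rw [show max (0:ℝ) 0 = 0 by simp] at h2
        exact h2.congr fun i => (heq i).symm
      · intro s t hs ht
        refine tendsto_nhds_unique ((hξ s).dist (hξ t)) ?_
        have h2 : Filter.Tendsto (fun i => |((qt s i:ℚ):ℝ) - ((qt t i:ℚ):ℝ)|)
            Filter.atTop (nhds (|max s 0 - max t 0|)) := ((hqtlim s).sub (hqtlim t)).abs
        rw [max_eq_left hs, max_eq_left ht] at h2
        refine Filter.Tendsto.congr (fun i => ?_) h2
        exact (hΦdist _ _ (hqt0 s i) (hqt0 t i)).symm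
    refine ⟨⟨ξ, hray⟩, dist (g • x0) x0, fun t ht => ?_⟩
    have hgt : Filter.Tendsto (fun i => g • u t i) Filter.atTop (nhds (g • ξ t)) :=
      ((hGA.isometry g).continuous.tendsto _).comp (hξ t)
    exact le_of_tendsto (hgt.dist (hξ t)) (Filter.Eventually.of_forall fun i => hΦg _ (hqt0 t i))
  · -- Part 2
    intro hZfin
    by_contra hub
    have hne : {x : X | g • x = x}.Nonempty := by
      rcases Set.eq_empty_or_nonempty {x : X | g • x = x} with he | hne
      · rw [he] at hub; exact absurd Bornology.isBounded_empty hub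
      · exact hne
    obtain ⟨p, hp⟩ := hne
    have hx : ∀ n : ℕ, ∃ x : X, g • x = x ∧ (n:ℝ) < dist p x := by
      intro n
      by_contra hcon
      push_neg at hcon
      refine hub ((Metric.isBounded_closedBall (x := p) (r := n)).subset ?_)
      intro z hz
      exact Metric.mem_closedBall.mpr ((dist_comm p z) ▸ hcon z hz)
    choose x hxfix hxfar using hx
    choose hh kk hkkK hxeq using fun n => hcover (x n)
    set γ : ℕ → G := fun n => (hh n)⁻¹ * g * hh n with hγ
    have hγfix : ∀ n, γ n • kk n = kk n := by
      intro n
      calc γ n • kk n = (hh n)⁻¹ • g • hh n • kk n := by rw [hγ, mul_smul, mul_smul]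
        _ = (hh n)⁻¹ • g • x n := by rw [← hxeq n]
        _ = (hh n)⁻¹ • x n := by rw [hxfix n]
        _ = (hh n)⁻¹ • hh n • kk n := by rw [hxeq n]
        _ = kk n := inv_smul_smul _ _
    have hγmem : ∀ n, γ n ∈ {gg : G | ((fun x : X => gg • x) '' K ∩ K).Nonempty} :=
      fun n => ⟨kk n, ⟨kk n, hkkK n, hγfix n⟩, hkkK n⟩
    have hPfin := hGA.proper K hKcomp
    haveI : Finite ↥{gg : G | ((fun x : X => gg • x) '' K ∩ K).Nonempty} := hPfin.to_subtype
    obtain ⟨v, hv⟩ := Finite.exists_infinite_fiber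
      (fun n : ℕ => (⟨γ n, hγmem n⟩ : {gg : G | ((fun x : X => gg • x) '' K ∩ K).Nonempty}))
    have hset : ((fun n : ℕ => (⟨γ n, hγmem n⟩ :
        {gg : G | ((fun x : X => gg • x) '' K ∩ K).Nonempty})) ⁻¹' {v}) = {n : ℕ | γ n = (v:G)} := by
      ext n
      simp [Subtype.ext_iff]
    have hNinf : {n : ℕ | γ n = (v:G)}.Infinite := by
      rw [← hset]
      exact Set.infinite_coe_iff.mp hv
    obtain ⟨n0, hn0⟩ := hNinf.nonempty
    have hcmem : ∀ n ∈ {n : ℕ | γ n = (v:G)}, g * (hh n * (hh n0)⁻¹) = (hh n * (hh n0)⁻¹) * g := by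
      intro n hn
      have he : (hh n)⁻¹ * g * hh n = (hh n0)⁻¹ * g * hh n0 := by
        have h1 : γ n = γ n0 := hn.trans hn0.symm
        rw [hγ] at h1
        exact h1
      calc g * (hh n * (hh n0)⁻¹) = hh n * ((hh n)⁻¹ * g * hh n) * (hh n0)⁻¹ := by group
        _ = hh n * ((hh n0)⁻¹ * g * hh n0) * (hh n0)⁻¹ := by rw [he]
        _ = (hh n * (hh n0)⁻¹) * g := by group
    have hBb : Bornology.IsBounded
        (⋃ z ∈ {h : G | g * h = h * g}, (fun w : X => (z * hh n0) • w) '' K) := by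
      refine (Bornology.isBounded_biUnion hZfin).mpr ?_
      intro z _
      exact (hKcomp.image (hGA.isometry (z * hh n0)).continuous).isBounded
    obtain ⟨R, hR⟩ := hBb.subset_closedBall p
    obtain ⟨M, hM⟩ := exists_nat_ge R
    obtain ⟨n, hnN, hnM⟩ := hNinf.exists_notMem_finset (Finset.range (M+1))
    have hxB : x n ∈ ⋃ z ∈ {h : G | g * h = h * g}, (fun w : X => (z * hh n0) • w) '' K := by
      refine Set.mem_biUnion (hcmem n hnN) ⟨kk n, hkkK n, ?_⟩
      show ((hh n * (hh n0)⁻¹) * hh n0) • kk n = x n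
      rw [inv_mul_cancel_right]
      exact (hxeq n).symm
    have hd1 : dist (x n) p ≤ R := Metric.mem_closedBall.mp (hR hxB)
    have hd2 : (n:ℝ) < dist p (x n) := hxfar n
    have hd3 : (M:ℝ) + 1 ≤ (n:ℝ) := by
      have : M + 1 ≤ n := by
        by_contra hcon
        push_neg at hcon
        exact hnM (Finset.mem_range.mpr hcon)
      exact_mod_cast this
    rw [dist_comm] at hd2
    linarith
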